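/- Let λ ≥ 0, let v ∈ ℝ^d be a unit vector, set Σ = I_d + λ v vᵀ, and let x ~ N(0, Σ). Let f : ℝ → ℝ be three times differentiable with |f'| ≤ M₁, |f''| ≤ M₂, |f'''| ≤ M₃ on ℝ, and define H(z, z⋆) := f'(z)² + (f(z) − f(z⋆))·f''(z). Then for all unit vectors h, w, v⋆ ∈ ℝ^d: | E[ H(⟨w,x⟩, ⟨v⋆,x⟩)·⟨h,x⟩² ] − E[ f'(⟨v⋆,x⟩)²·⟨h,x⟩² ] | ≤ 3√3·M₁·M₂·(1+λ)^{3/2}·‖w − v⋆‖ + (3/2)·M₁·M₃·(1+λ)²·‖w − v⋆‖². -/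

import Mathlib

open MeasureTheory ProbabilityTheory Matrix

/-- `X` is a centered Gaussian random vector with covariance matrix `S`:
by the Cramér–Wold device, this holds iff every linear functional `⟨u, X⟩` has the
one-dimensional centered Gaussian law with variance `uᵀ S u`. -/
def IsCenteredGaussianVec {Ω : Type*} [MeasurableSpace Ω] (P : Measure Ω) {d : ℕ}
    (S : Matrix (Fin d) (Fin d) ℝ) (X : Ω → Fin d → ℝ) : Prop :=
  Measurable X ∧
    ∀ u : Fin d → ℝ, Measure.map (fun ω => u ⬝ᵥ X ω) P =
      gaussianReal 0 (Real.toNNReal (u ⬝ᵥ S.mulVec u))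

section Aux
open Real
open scoped NNReal ENNReal

lemma aux_integrable_pow_gauss {b : ℝ} (hb : 0 < b) (k : ℕ) :
    Integrable (fun x : ℝ => x ^ k * Real.exp (-b * x ^ 2)) := by
  have hc : 0 < b / 2 := by linarith
  set C : ℝ := (k.factorial : ℝ) * (2 / b) ^ k with hC
  have hmeas : AEStronglyMeasurable (fun x : ℝ => x ^ k * Real.exp (-b * x ^ 2)) volume := by
    apply Continuous.aestronglyMeasurable
    continuity
  refine Integrable.mono' ((integrable_exp_neg_mul_sq hb).add
    ((integrable_exp_neg_mul_sq hc).const_mul C)) hmeas ?_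
  filter_upwards with x
  have hx2 : (0:ℝ) ≤ x ^ 2 := sq_nonneg x
  have key : x ^ (2 * k) * Real.exp (-b * x ^ 2) ≤ C * Real.exp (-(b/2) * x ^ 2) := by
    have h1 : ((b/2) * x ^ 2) ^ k / (k.factorial : ℝ) ≤ Real.exp ((b/2) * x ^ 2) :=
      Real.pow_div_factorial_le_exp _ (by positivity) k
    have hfac : (0:ℝ) < (k.factorial : ℝ) := by positivity
    have h2 : x ^ (2 * k) ≤ C * Real.exp ((b/2) * x ^ 2) := by
      have : ((b/2)^k * x ^ (2*k)) / (k.factorial : ℝ) ≤ Real.exp ((b/2) * x ^ 2) := by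
        calc ((b/2)^k * x ^ (2*k)) / (k.factorial : ℝ)
            = ((b/2) * x ^ 2) ^ k / (k.factorial : ℝ) := by rw [mul_pow, pow_mul]
          _ ≤ Real.exp ((b/2) * x ^ 2) := h1
      rw [hC]
      rw [div_le_iff₀ hfac] at this
      have hb2 : (0:ℝ) < (b/2)^k := by positivity
      calc x ^ (2*k) = ((b/2)^k * x ^ (2*k)) / (b/2)^k := by field_simp
        _ ≤ (Real.exp ((b/2) * x ^ 2) * (k.factorial : ℝ)) / (b/2)^k := by
            exact div_le_div_of_nonneg_right this hb2.le
        _ = (k.factorial : ℝ) * (2 / b) ^ k * Real.exp ((b/2) * x ^ 2) := by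
            rw [div_pow]; field_simp; rw [← mul_pow]; congr 1; field_simp
    calc x ^ (2*k) * Real.exp (-b * x ^ 2)
        ≤ C * Real.exp ((b/2) * x ^ 2) * Real.exp (-b * x ^ 2) := by
          apply mul_le_mul_of_nonneg_right h2 (Real.exp_pos _).le
      _ = C * Real.exp (-(b/2) * x ^ 2) := by
          rw [mul_assoc, ← Real.exp_add]; ring_nf
  have habs : |x| ^ k ≤ 1 + x ^ (2 * k) := by
    rcases le_or_gt (|x|) 1 with hle | hgt
    · have : |x| ^ k ≤ 1 := pow_le_one₀ (abs_nonneg x) hle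
      nlinarith [pow_nonneg (sq_nonneg x) k, pow_mul x 2 k]
    · have h1 : |x| ^ k ≤ |x| ^ (2 * k) := pow_le_pow_right₀ hgt.le (by omega)
      have h2 : |x| ^ (2 * k) = x ^ (2 * k) := by
        rw [pow_mul, pow_mul, sq_abs]
      nlinarith
  have : ‖x ^ k * Real.exp (-b * x ^ 2)‖ = |x| ^ k * Real.exp (-b * x ^ 2) := by
    rw [norm_mul, norm_pow, Real.norm_eq_abs, Real.norm_eq_abs, Real.abs_exp]
  rw [this]
  calc |x| ^ k * Real.exp (-b * x ^ 2)
      ≤ (1 + x ^ (2*k)) * Real.exp (-b * x ^ 2) := by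
        apply mul_le_mul_of_nonneg_right habs (Real.exp_pos _).le
    _ = Real.exp (-b * x ^ 2) + x ^ (2*k) * Real.exp (-b * x ^ 2) := by ring
    _ ≤ Real.exp (-b * x ^ 2) + C * Real.exp (-(b/2) * x ^ 2) := by linarith

lemma aux_rec {b : ℝ} (hb : 0 < b) (k : ℕ) :
    ∫ x : ℝ, x ^ (k + 2) * Real.exp (-b * x ^ 2) =
      ((k + 1 : ℝ) / (2 * b)) * ∫ x : ℝ, x ^ k * Real.exp (-b * x ^ 2) := by
  have hb' : (2 * b) ≠ 0 := by positivity
  have hu : ∀ x : ℝ, HasDerivAt (fun y : ℝ => y ^ (k + 1)) (((k:ℝ) + 1) * x ^ k) x := by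
    intro x
    simpa using hasDerivAt_pow (k + 1) x
  have hv : ∀ x : ℝ, HasDerivAt (fun y : ℝ => -(2 * b)⁻¹ * Real.exp (-b * y ^ 2))
      (x * Real.exp (-b * x ^ 2)) x := by
    intro x
    have h1 : HasDerivAt (fun y : ℝ => -b * y ^ 2) (-b * (2 * x)) x := by
      simpa using (((hasDerivAt_pow 2 x)).const_mul (-b))
    have h2 := (h1.exp).const_mul (-(2 * b)⁻¹)
    convert h2 using 1
    · rfl
    · rfl
    field_simp
  have huv' : Integrable ((fun y : ℝ => y ^ (k + 1)) *
      (fun x : ℝ => x * Real.exp (-b * x ^ 2))) := by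
    have : ((fun y : ℝ => y ^ (k + 1)) * (fun x : ℝ => x * Real.exp (-b * x ^ 2)))
        = fun x : ℝ => x ^ (k + 2) * Real.exp (-b * x ^ 2) := by
      funext x; simp [Pi.mul_apply]; ring
    rw [this]; exact aux_integrable_pow_gauss hb (k + 2)
  have hu'v : Integrable ((fun x : ℝ => ((k:ℝ) + 1) * x ^ k) *
      (fun y : ℝ => -(2 * b)⁻¹ * Real.exp (-b * y ^ 2))) := by
    have : ((fun x : ℝ => ((k:ℝ) + 1) * x ^ k) *
        (fun y : ℝ => -(2 * b)⁻¹ * Real.exp (-b * y ^ 2)))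
        = fun x : ℝ => (((k:ℝ) + 1) * (-(2 * b)⁻¹)) * (x ^ k * Real.exp (-b * x ^ 2)) := by
      funext x; simp [Pi.mul_apply]; ring
    rw [this]; exact (aux_integrable_pow_gauss hb k).const_mul _
  have huv : Integrable ((fun y : ℝ => y ^ (k + 1)) *
      (fun y : ℝ => -(2 * b)⁻¹ * Real.exp (-b * y ^ 2))) := by
    have : ((fun y : ℝ => y ^ (k + 1)) * (fun y : ℝ => -(2 * b)⁻¹ * Real.exp (-b * y ^ 2)))
        = fun x : ℝ => (-(2 * b)⁻¹) * (x ^ (k + 1) * Real.exp (-b * x ^ 2)) := by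
      funext x; simp [Pi.mul_apply]; ring
    rw [this]; exact (aux_integrable_pow_gauss hb (k + 1)).const_mul _
  have key := MeasureTheory.integral_mul_deriv_eq_deriv_mul_of_integrable (fun x _ => hu x) (fun x _ => hv x) huv' hu'v huv
  have lhs_eq : ∫ x : ℝ, x ^ (k + 1) * (x * Real.exp (-b * x ^ 2)) =
      ∫ x : ℝ, x ^ (k + 2) * Real.exp (-b * x ^ 2) := by
    congr 1; funext x; ring
  have rhs_eq : ∫ x : ℝ, ((k:ℝ) + 1) * x ^ k * (-(2 * b)⁻¹ * Real.exp (-b * x ^ 2)) =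
      (((k:ℝ) + 1) * (-(2 * b)⁻¹)) * ∫ x : ℝ, x ^ k * Real.exp (-b * x ^ 2) := by
    rw [← MeasureTheory.integral_const_mul]
    congr 1; funext x; ring
  rw [lhs_eq] at key
  rw [key, rhs_eq]
  push_cast
  ring

lemma aux_J2 {b : ℝ} (hb : 0 < b) :
    ∫ x : ℝ, x ^ 2 * Real.exp (-b * x ^ 2) = Real.sqrt (Real.pi / b) / (2 * b) := by
  have h := aux_rec hb 0
  simp only [pow_zero, one_mul] at h
  rw [show (0:ℕ) + 2 = 2 by rfl] at h
  rw [h, integral_gaussian]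
  push_cast
  ring

lemma aux_J4 {b : ℝ} (hb : 0 < b) :
    ∫ x : ℝ, x ^ 4 * Real.exp (-b * x ^ 2) = 3 * Real.sqrt (Real.pi / b) / (4 * b ^ 2) := by
  have h := aux_rec hb 2
  rw [show (2:ℕ) + 2 = 4 by rfl] at h
  rw [h, aux_J2 hb]
  push_cast
  field_simp
  ring


lemma gaussPDF_as_nnreal (V : ℝ≥0) :
    gaussianPDF 0 V = fun x => ((Real.toNNReal (gaussianPDFReal 0 V x) : ℝ≥0) : ℝ≥0∞) := by
  funext x
  rfl

lemma integral_gaussianReal_eq (V : ℝ≥0) (hV : V ≠ 0) (g : ℝ → ℝ) :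
    ∫ x, g x ∂(gaussianReal 0 V) = ∫ x, gaussianPDFReal 0 V x * g x := by
  rw [gaussianReal_of_var_ne_zero _ hV, gaussPDF_as_nnreal]
  rw [integral_withDensity_eq_integral_smul
    (measurable_gaussianPDFReal 0 V).real_toNNReal g]
  congr 1
  funext x
  rw [NNReal.smul_def, Real.coe_toNNReal _ (gaussianPDFReal_nonneg 0 V x)]
  rfl

lemma gaussPDF_mul_eq (V : ℝ≥0) (hV : V ≠ 0) (k : ℕ) :
    (fun x : ℝ => gaussianPDFReal 0 V x * x ^ k) =
      fun x : ℝ => (Real.sqrt (2 * π * V))⁻¹ *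
        (x ^ k * Real.exp (-(2 * (V:ℝ))⁻¹ * x ^ 2)) := by
  have hVpos : (0:ℝ) < (V:ℝ) := by exact_mod_cast (pos_iff_ne_zero.2 hV : 0 < V)
  funext x
  rw [gaussianPDFReal]
  rw [show -(x - 0) ^ 2 / (2 * (V:ℝ)) = -(2 * (V:ℝ))⁻¹ * x ^ 2 by field_simp; ring]
  ring

lemma integrable_pow_gaussianReal (V : ℝ≥0) (k : ℕ) :
    Integrable (fun x : ℝ => x ^ k) (gaussianReal 0 V) := by
  by_cases hV : V = 0
  · subst hV
    rw [gaussianReal_zero_var]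
    refine (integrable_const ((0:ℝ) ^ k)).congr ?_
    rw [MeasureTheory.ae_dirac_eq]
    exact Filter.eventually_pure.2 rfl
  · have hVpos : (0:ℝ) < (V:ℝ) := by exact_mod_cast (pos_iff_ne_zero.2 hV : 0 < V)
    have hb : (0:ℝ) < (2 * (V:ℝ))⁻¹ := by positivity
    rw [gaussianReal_of_var_ne_zero _ hV, gaussPDF_as_nnreal]
    rw [integrable_withDensity_iff_integrable_smul
      (measurable_gaussianPDFReal 0 V).real_toNNReal]
    have : (fun x : ℝ => (Real.toNNReal (gaussianPDFReal 0 V x) : ℝ≥0) • (x ^ k)) =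
        fun x : ℝ => gaussianPDFReal 0 V x * x ^ k := by
      funext x
      rw [NNReal.smul_def, Real.coe_toNNReal _ (gaussianPDFReal_nonneg 0 V x)]
      rfl
    rw [this, gaussPDF_mul_eq V hV k]
    exact (aux_integrable_pow_gauss hb k).const_mul _

lemma gauss_moment2 (V : ℝ≥0) :
    ∫ x, x ^ 2 ∂(gaussianReal 0 V) = (V : ℝ) := by
  by_cases hV : V = 0
  · subst hV
    rw [gaussianReal_zero_var, integral_dirac]
    norm_num
  · have hVpos : (0:ℝ) < (V:ℝ) := by exact_mod_cast (pos_iff_ne_zero.2 hV : 0 < V)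
    have hb : (0:ℝ) < (2 * (V:ℝ))⁻¹ := by positivity
    rw [integral_gaussianReal_eq V hV]
    rw [show (fun x : ℝ => gaussianPDFReal 0 V x * x ^ 2) = _ from gaussPDF_mul_eq V hV 2]
    rw [integral_const_mul, aux_J2 hb]
    rw [show π / (2 * (V:ℝ))⁻¹ = 2 * π * (V:ℝ) by field_simp]
    have hsq : (0:ℝ) < Real.sqrt (2 * π * (V:ℝ)) := Real.sqrt_pos.2 (by positivity)
    field_simp

lemma gauss_moment4 (V : ℝ≥0) :
    ∫ x, x ^ 4 ∂(gaussianReal 0 V) = 3 * (V : ℝ) ^ 2 := by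
  by_cases hV : V = 0
  · subst hV
    rw [gaussianReal_zero_var, integral_dirac]
    norm_num
  · have hVpos : (0:ℝ) < (V:ℝ) := by exact_mod_cast (pos_iff_ne_zero.2 hV : 0 < V)
    have hb : (0:ℝ) < (2 * (V:ℝ))⁻¹ := by positivity
    rw [integral_gaussianReal_eq V hV]
    rw [show (fun x : ℝ => gaussianPDFReal 0 V x * x ^ 4) = _ from gaussPDF_mul_eq V hV 4]
    rw [integral_const_mul, aux_J4 hb]
    rw [show π / (2 * (V:ℝ))⁻¹ = 2 * π * (V:ℝ) by field_simp]
    have hsq : (0:ℝ) < Real.sqrt (2 * π * (V:ℝ)) := Real.sqrt_pos.2 (by positivity)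
    field_simp
    ring

lemma my_CS {α : Type*} [MeasurableSpace α] (μ : Measure α) {f g : α → ℝ}
    (hf0 : ∀ x, 0 ≤ f x) (hg0 : ∀ x, 0 ≤ g x)
    (hf2 : Integrable (fun x => f x ^ 2) μ) (hg2 : Integrable (fun x => g x ^ 2) μ) :
    ∫ x, f x * g x ∂μ ≤
      Real.sqrt (∫ x, f x ^ 2 ∂μ) * Real.sqrt (∫ x, g x ^ 2 ∂μ) := by
  set A := ∫ x, f x ^ 2 ∂μ with hAdef
  set B := ∫ x, g x ^ 2 ∂μ with hBdef
  have hA : 0 ≤ A := integral_nonneg fun x => sq_nonneg _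
  have hB : 0 ≤ B := integral_nonneg fun x => sq_nonneg _
  have hsA : 0 ≤ Real.sqrt A := Real.sqrt_nonneg _
  have hsB : 0 ≤ Real.sqrt B := Real.sqrt_nonneg _
  refine le_of_forall_pos_le_add fun ε hε => ?_
  set s : ℝ := Real.sqrt A + Real.sqrt B + 1 with hsdef
  have hs : 0 < s := by positivity
  set δ : ℝ := ε / s with hδdef
  have hδ : 0 < δ := by positivity
  set t : ℝ := (Real.sqrt B + δ) / (Real.sqrt A + δ) with htdef
  have ht : 0 < t := by positivity
  have hptwise : ∀ x, f x * g x ≤ (t * f x ^ 2 + t⁻¹ * g x ^ 2) / 2 := by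
    intro x
    have h0 := sq_nonneg (Real.sqrt t * f x - Real.sqrt t⁻¹ * g x)
    have e1 : Real.sqrt t ^ 2 = t := Real.sq_sqrt ht.le
    have e2 : Real.sqrt t⁻¹ ^ 2 = t⁻¹ := Real.sq_sqrt (inv_nonneg.2 ht.le)
    have e3 : Real.sqrt t * Real.sqrt t⁻¹ = 1 := by
      rw [← Real.sqrt_mul ht.le, mul_inv_cancel₀ ht.ne', Real.sqrt_one]
    have expand : (Real.sqrt t * f x - Real.sqrt t⁻¹ * g x) ^ 2
        = t * f x ^ 2 - 2 * (f x * g x) + t⁻¹ * g x ^ 2 := by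
      calc (Real.sqrt t * f x - Real.sqrt t⁻¹ * g x) ^ 2
          = Real.sqrt t ^ 2 * f x ^ 2
            - 2 * (Real.sqrt t * Real.sqrt t⁻¹) * (f x * g x)
            + Real.sqrt t⁻¹ ^ 2 * g x ^ 2 := by ring
        _ = t * f x ^ 2 - 2 * (f x * g x) + t⁻¹ * g x ^ 2 := by rw [e1, e2, e3]; ring
    rw [expand] at h0
    linarith
  have hint : Integrable (fun x => (t * f x ^ 2 + t⁻¹ * g x ^ 2) / 2) μ :=
    ((hf2.const_mul t).add (hg2.const_mul t⁻¹)).div_const 2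
  have step1 : ∫ x, f x * g x ∂μ ≤ ∫ x, (t * f x ^ 2 + t⁻¹ * g x ^ 2) / 2 ∂μ :=
    integral_mono_of_nonneg (Filter.Eventually.of_forall fun x =>
      mul_nonneg (hf0 x) (hg0 x)) hint (Filter.Eventually.of_forall hptwise)
  have step2 : ∫ x, (t * f x ^ 2 + t⁻¹ * g x ^ 2) / 2 ∂μ = (t * A + t⁻¹ * B) / 2 := by
    rw [integral_div, integral_add (hf2.const_mul t) (hg2.const_mul t⁻¹),
      integral_const_mul, integral_const_mul]
  have hAd : 0 < Real.sqrt A + δ := by positivity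
  have hBd : 0 < Real.sqrt B + δ := by positivity
  have hA2 : A = Real.sqrt A * Real.sqrt A := (Real.mul_self_sqrt hA).symm
  have hB2 : B = Real.sqrt B * Real.sqrt B := (Real.mul_self_sqrt hB).symm
  have k1 : t * A ≤ (Real.sqrt B + δ) * Real.sqrt A := by
    have h1 : A / (Real.sqrt A + δ) ≤ Real.sqrt A := by
      rw [div_le_iff₀ hAd]
      nlinarith
    have h2 : t * A = (Real.sqrt B + δ) * (A / (Real.sqrt A + δ)) := by
      rw [htdef]; ring
    rw [h2]
    exact mul_le_mul_of_nonneg_left h1 hBd.le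
  have k2 : t⁻¹ * B ≤ (Real.sqrt A + δ) * Real.sqrt B := by
    have h1 : B / (Real.sqrt B + δ) ≤ Real.sqrt B := by
      rw [div_le_iff₀ hBd]
      nlinarith
    have h2 : t⁻¹ * B = (Real.sqrt A + δ) * (B / (Real.sqrt B + δ)) := by
      rw [htdef, inv_div]; ring
    rw [h2]
    exact mul_le_mul_of_nonneg_left h1 hAd.le
  have hδs : δ * s = ε := by
    rw [hδdef]; field_simp
  calc ∫ x, f x * g x ∂μ ≤ (t * A + t⁻¹ * B) / 2 := by rw [← step2]; exact step1
    _ ≤ ((Real.sqrt B + δ) * Real.sqrt A + (Real.sqrt A + δ) * Real.sqrt B) / 2 := by linarith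
    _ = Real.sqrt A * Real.sqrt B + δ * (Real.sqrt A + Real.sqrt B) / 2 := by ring
    _ ≤ Real.sqrt A * Real.sqrt B + ε := by nlinarith

end Aux

theorem stmt11 {Ω : Type*} [MeasurableSpace Ω] (P : Measure Ω) [IsProbabilityMeasure P]
    {d : ℕ} (lam : ℝ) (hlam : 0 ≤ lam)
    (v : Fin d → ℝ) (hv : v ⬝ᵥ v = 1)
    (S : Matrix (Fin d) (Fin d) ℝ) (hS : S = 1 + lam • vecMulVec v v)
    (X : Ω → Fin d → ℝ) (hX : IsCenteredGaussianVec P S X)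
    (f : ℝ → ℝ) (M₁ M₂ M₃ : ℝ)
    (h1 : Differentiable ℝ f) (h2 : Differentiable ℝ (deriv f))
    (h3 : Differentiable ℝ (deriv (deriv f)))
    (hM₁ : ∀ x, |deriv f x| ≤ M₁) (hM₂ : ∀ x, |deriv (deriv f) x| ≤ M₂)
    (hM₃ : ∀ x, |deriv (deriv (deriv f)) x| ≤ M₃)
    (h w vstar : Fin d → ℝ) (hh : h ⬝ᵥ h = 1) (hw : w ⬝ᵥ w = 1)
    (hvs : vstar ⬝ᵥ vstar = 1) :
    |(∫ ω, ((deriv f (w ⬝ᵥ X ω)) ^ 2 +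
          (f (w ⬝ᵥ X ω) - f (vstar ⬝ᵥ X ω)) * deriv (deriv f) (w ⬝ᵥ X ω)) *
          (h ⬝ᵥ X ω) ^ 2 ∂P) -
        (∫ ω, (deriv f (vstar ⬝ᵥ X ω)) ^ 2 * (h ⬝ᵥ X ω) ^ 2 ∂P)| ≤
      3 * Real.sqrt 3 * M₁ * M₂ * (1 + lam) ^ ((3 : ℝ) / 2) *
          Real.sqrt ((w - vstar) ⬝ᵥ (w - vstar)) +
        (3 / 2) * M₁ * M₃ * (1 + lam) ^ 2 * ((w - vstar) ⬝ᵥ (w - vstar)) := by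
  obtain ⟨hXmeas, hXlaw⟩ := hX
  have hM₁0 : 0 ≤ M₁ := le_trans (abs_nonneg _) (hM₁ 0)
  have hM₂0 : 0 ≤ M₂ := le_trans (abs_nonneg _) (hM₂ 0)
  have hM₃0 : 0 ≤ M₃ := le_trans (abs_nonneg _) (hM₃ 0)
  have hlam1 : (0:ℝ) < 1 + lam := by linarith
  -- measurability of linear functionals
  have hdot : ∀ u : Fin d → ℝ, Measurable (fun ω => u ⬝ᵥ X ω) := by
    intro u
    show Measurable fun ω => ∑ i, u i * X ω i
    exact Finset.measurable_sum _ fun i _ =>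
      measurable_const.mul ((measurable_pi_apply i).comp hXmeas)
  -- the quadratic form
  set q : (Fin d → ℝ) → ℝ := fun u => u ⬝ᵥ S.mulVec u with hqdef
  have hself : ∀ u : Fin d → ℝ, 0 ≤ u ⬝ᵥ u := fun u =>
    Finset.sum_nonneg fun i _ => mul_self_nonneg _
  have hqeq : ∀ u : Fin d → ℝ, q u = u ⬝ᵥ u + lam * (v ⬝ᵥ u) ^ 2 := by
    intro u
    have hvv : (vecMulVec v v).mulVec u = (v ⬝ᵥ u) • v := by
      funext j
      simp only [Matrix.mulVec, dotProduct, Matrix.vecMulVec_apply, Pi.smul_apply,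
        smul_eq_mul]
      rw [Finset.sum_mul]
      exact Finset.sum_congr rfl fun i _ => by ring
    rw [hqdef]
    simp only [hS, Matrix.add_mulVec, Matrix.one_mulVec, Matrix.smul_mulVec, hvv,
      dotProduct_add, dotProduct_smul, smul_eq_mul]
    rw [dotProduct_comm u v]
    ring
  have hq0 : ∀ u : Fin d → ℝ, 0 ≤ q u := fun u => by
    rw [hqeq]
    have := hself u
    nlinarith [sq_nonneg (v ⬝ᵥ u)]
  -- transfer of moments
  have transfer : ∀ (u : Fin d → ℝ) (k : ℕ),
      ∫ ω, (u ⬝ᵥ X ω) ^ k ∂P =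
        ∫ x, x ^ k ∂(gaussianReal 0 (Real.toNNReal (q u))) := by
    intro u k
    rw [← hXlaw u]
    exact (integral_map (hdot u).aemeasurable
      ((measurable_id'.pow_const k).aestronglyMeasurable)).symm
  have hintk : ∀ (u : Fin d → ℝ) (k : ℕ), Integrable (fun ω => (u ⬝ᵥ X ω) ^ k) P := by
    intro u k
    have h0 := integrable_pow_gaussianReal (Real.toNNReal (q u)) k
    rw [← hXlaw u] at h0
    exact (integrable_map_measure ((measurable_id'.pow_const k).aestronglyMeasurable)
      (hdot u).aemeasurable).1 h0
  have hmom2 : ∀ u : Fin d → ℝ, ∫ ω, (u ⬝ᵥ X ω) ^ 2 ∂P = q u := by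
    intro u
    rw [transfer u 2, gauss_moment2, Real.coe_toNNReal _ (hq0 u)]
  have hmom4 : ∀ u : Fin d → ℝ, ∫ ω, (u ⬝ᵥ X ω) ^ 4 ∂P = 3 * (q u) ^ 2 := by
    intro u
    rw [transfer u 4, gauss_moment4, Real.coe_toNNReal _ (hq0 u)]
  -- abbreviations
  set u : Fin d → ℝ := w - vstar with hudef
  set nu : ℝ := u ⬝ᵥ u with hnudef
  have hnu0 : 0 ≤ nu := hself u
  -- variance bounds
  have hq_le : ∀ z : Fin d → ℝ, q z ≤ (1 + lam) * (z ⬝ᵥ z) := by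
    intro z
    have hCS : (v ⬝ᵥ z) ^ 2 ≤ (v ⬝ᵥ v) * (z ⬝ᵥ z) := by
      have h0 := Finset.sum_mul_sq_le_sq_mul_sq Finset.univ v z
      simpa [dotProduct, pow_two] using h0
    rw [hv, one_mul] at hCS
    rw [hqeq]
    nlinarith [hself z]
  have hqh : q h ≤ 1 + lam := by
    have := hq_le h; rwa [hh, mul_one] at this
  have hqu : q u ≤ (1 + lam) * nu := hq_le u
  -- Lipschitz bounds
  have hlipF : ∀ a b : ℝ, |f a - f b| ≤ M₁ * |a - b| := by
    intro a b
    have := Convex.norm_image_sub_le_of_norm_deriv_le (f := f) (fun x _ => h1 x)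
      (fun x _ => by rw [Real.norm_eq_abs]; exact hM₁ x) convex_univ
      (Set.mem_univ b) (Set.mem_univ a)
    simpa [Real.norm_eq_abs] using this
  have hlipD : ∀ a b : ℝ, |deriv f a - deriv f b| ≤ M₂ * |a - b| := by
    intro a b
    have := Convex.norm_image_sub_le_of_norm_deriv_le (f := deriv f) (fun x _ => h2 x)
      (fun x _ => by rw [Real.norm_eq_abs]; exact hM₂ x) convex_univ
      (Set.mem_univ b) (Set.mem_univ a)
    simpa [Real.norm_eq_abs] using this
  -- pointwise bound
  have hpt : ∀ a b : ℝ,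
      |((deriv f a) ^ 2 + (f a - f b) * deriv (deriv f) a) - (deriv f b) ^ 2| ≤
        3 * M₁ * M₂ * |a - b| := by
    intro a b
    have b1 : |(deriv f a) ^ 2 - (deriv f b) ^ 2| ≤ M₂ * |a - b| * (2 * M₁) := by
      have e1 : (deriv f a) ^ 2 - (deriv f b) ^ 2 =
          (deriv f a - deriv f b) * (deriv f a + deriv f b) := by ring
      rw [e1, abs_mul]
      refine mul_le_mul (hlipD a b) ?_ (abs_nonneg _) (by positivity)
      calc |deriv f a + deriv f b| ≤ |deriv f a| + |deriv f b| := abs_add_le _ _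
        _ ≤ 2 * M₁ := by have := hM₁ a; have := hM₁ b; linarith
    have b2 : |(f a - f b) * deriv (deriv f) a| ≤ M₁ * |a - b| * M₂ := by
      rw [abs_mul]
      exact mul_le_mul (hlipF a b) (hM₂ a) (abs_nonneg _) (by positivity)
    calc |((deriv f a) ^ 2 + (f a - f b) * deriv (deriv f) a) - (deriv f b) ^ 2|
        = |((deriv f a) ^ 2 - (deriv f b) ^ 2) + (f a - f b) * deriv (deriv f) a| := by
          congr 1; ring
      _ ≤ |(deriv f a) ^ 2 - (deriv f b) ^ 2| + |(f a - f b) * deriv (deriv f) a| :=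
          abs_add_le _ _
      _ ≤ 3 * M₁ * M₂ * |a - b| := by nlinarith [abs_nonneg (a - b)]
  -- difference of linear functionals
  have hsub : ∀ ω, w ⬝ᵥ X ω - vstar ⬝ᵥ X ω = u ⬝ᵥ X ω := by
    intro ω
    rw [hudef, sub_dotProduct]
  -- continuity / measurability
  have cf : Continuous f := h1.continuous
  have cf' : Continuous (deriv f) := h2.continuous
  have cf'' : Continuous (deriv (deriv f)) := h3.continuous
  have mB2 : Measurable (fun ω => (h ⬝ᵥ X ω) ^ 2) := (hdot h).pow_const 2
  have mU : Measurable (fun ω => u ⬝ᵥ X ω) := hdot u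
  have mI1 : Measurable (fun ω =>
      ((deriv f (w ⬝ᵥ X ω)) ^ 2 +
        (f (w ⬝ᵥ X ω) - f (vstar ⬝ᵥ X ω)) * deriv (deriv f) (w ⬝ᵥ X ω)) *
        (h ⬝ᵥ X ω) ^ 2) := by
    exact ((((cf'.measurable.comp (hdot w)).pow_const 2).add
      (((cf.measurable.comp (hdot w)).sub (cf.measurable.comp (hdot vstar))).mul
        (cf''.measurable.comp (hdot w)))).mul mB2)
  have mI2 : Measurable (fun ω => (deriv f (vstar ⬝ᵥ X ω)) ^ 2 * (h ⬝ᵥ X ω) ^ 2) :=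
    ((cf'.measurable.comp (hdot vstar)).pow_const 2).mul mB2
  -- integrability
  have hB2 := hintk h 2
  have hB4 := hintk h 4
  have hU2 := hintk u 2
  have hUB : Integrable (fun ω => |u ⬝ᵥ X ω| * (h ⬝ᵥ X ω) ^ 2) P := by
    refine ((hU2.add hB4).div_const 2).mono'
      ((mU.abs.mul mB2).aestronglyMeasurable) ?_
    filter_upwards with ω
    have h0 := sq_nonneg (|u ⬝ᵥ X ω| - (h ⬝ᵥ X ω) ^ 2)
    have e2 : |u ⬝ᵥ X ω| ^ 2 = (u ⬝ᵥ X ω) ^ 2 := sq_abs _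
    have e4 : (h ⬝ᵥ X ω) ^ 4 = ((h ⬝ᵥ X ω) ^ 2) ^ 2 := by ring
    rw [Real.norm_eq_abs, abs_mul, abs_abs, abs_of_nonneg (sq_nonneg (h ⬝ᵥ X ω))]
    simp only [Pi.add_apply]
    nlinarith
  have hI2 : Integrable (fun ω => (deriv f (vstar ⬝ᵥ X ω)) ^ 2 * (h ⬝ᵥ X ω) ^ 2) P := by
    refine (hB2.const_mul (M₁ ^ 2)).mono' mI2.aestronglyMeasurable ?_
    filter_upwards with ω
    rw [Real.norm_eq_abs, abs_mul, abs_of_nonneg (sq_nonneg (deriv f _)),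
      abs_of_nonneg (sq_nonneg _)]
    have hle := abs_le.1 (hM₁ (vstar ⬝ᵥ X ω))
    have hd2 : deriv f (vstar ⬝ᵥ X ω) ^ 2 ≤ M₁ ^ 2 := by nlinarith [hle.1, hle.2]
    exact mul_le_mul_of_nonneg_right hd2 (sq_nonneg _)
  have hI1 : Integrable (fun ω =>
      ((deriv f (w ⬝ᵥ X ω)) ^ 2 +
        (f (w ⬝ᵥ X ω) - f (vstar ⬝ᵥ X ω)) * deriv (deriv f) (w ⬝ᵥ X ω)) *
        (h ⬝ᵥ X ω) ^ 2) P := by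
    refine ((hB2.const_mul (M₁ ^ 2)).add (hUB.const_mul (M₁ * M₂))).mono'
      mI1.aestronglyMeasurable ?_
    filter_upwards with ω
    rw [Real.norm_eq_abs, abs_mul, abs_of_nonneg (sq_nonneg (h ⬝ᵥ X ω))]
    have hb1 : |(deriv f (w ⬝ᵥ X ω)) ^ 2| ≤ M₁ ^ 2 := by
      rw [abs_of_nonneg (sq_nonneg _)]
      have := abs_le.1 (hM₁ (w ⬝ᵥ X ω))
      nlinarith
    have hb2 : |(f (w ⬝ᵥ X ω) - f (vstar ⬝ᵥ X ω)) * deriv (deriv f) (w ⬝ᵥ X ω)| ≤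
        M₁ * M₂ * |u ⬝ᵥ X ω| := by
      rw [abs_mul, ← hsub ω]
      calc |f (w ⬝ᵥ X ω) - f (vstar ⬝ᵥ X ω)| * |deriv (deriv f) (w ⬝ᵥ X ω)| ≤
          (M₁ * |w ⬝ᵥ X ω - vstar ⬝ᵥ X ω|) * M₂ :=
            mul_le_mul (hlipF _ _) (hM₂ _) (abs_nonneg _) (by positivity)
        _ = M₁ * M₂ * |w ⬝ᵥ X ω - vstar ⬝ᵥ X ω| := by ring
    have habs : |(deriv f (w ⬝ᵥ X ω)) ^ 2 +
        (f (w ⬝ᵥ X ω) - f (vstar ⬝ᵥ X ω)) * deriv (deriv f) (w ⬝ᵥ X ω)| ≤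
        M₁ ^ 2 + M₁ * M₂ * |u ⬝ᵥ X ω| := le_trans (abs_add_le _ _) (by linarith)
    simp only [Pi.add_apply]
    calc |(deriv f (w ⬝ᵥ X ω)) ^ 2 +
          (f (w ⬝ᵥ X ω) - f (vstar ⬝ᵥ X ω)) * deriv (deriv f) (w ⬝ᵥ X ω)| * (h ⬝ᵥ X ω) ^ 2
        ≤ (M₁ ^ 2 + M₁ * M₂ * |u ⬝ᵥ X ω|) * (h ⬝ᵥ X ω) ^ 2 :=
          mul_le_mul_of_nonneg_right habs (sq_nonneg _)
      _ = M₁ ^ 2 * (h ⬝ᵥ X ω) ^ 2 + M₁ * M₂ * (|u ⬝ᵥ X ω| * (h ⬝ᵥ X ω) ^ 2) := by ring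
  -- main chain
  rw [← integral_sub hI1 hI2]
  have key1 : |∫ ω, (((deriv f (w ⬝ᵥ X ω)) ^ 2 +
        (f (w ⬝ᵥ X ω) - f (vstar ⬝ᵥ X ω)) * deriv (deriv f) (w ⬝ᵥ X ω)) *
        (h ⬝ᵥ X ω) ^ 2 - (deriv f (vstar ⬝ᵥ X ω)) ^ 2 * (h ⬝ᵥ X ω) ^ 2) ∂P| ≤
      (3 * M₁ * M₂) * ∫ ω, |u ⬝ᵥ X ω| * (h ⬝ᵥ X ω) ^ 2 ∂P := by
    rw [← integral_const_mul]
    calc |∫ ω, (((deriv f (w ⬝ᵥ X ω)) ^ 2 +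
          (f (w ⬝ᵥ X ω) - f (vstar ⬝ᵥ X ω)) * deriv (deriv f) (w ⬝ᵥ X ω)) *
          (h ⬝ᵥ X ω) ^ 2 - (deriv f (vstar ⬝ᵥ X ω)) ^ 2 * (h ⬝ᵥ X ω) ^ 2) ∂P|
        ≤ ∫ ω, |((deriv f (w ⬝ᵥ X ω)) ^ 2 +
          (f (w ⬝ᵥ X ω) - f (vstar ⬝ᵥ X ω)) * deriv (deriv f) (w ⬝ᵥ X ω)) *
          (h ⬝ᵥ X ω) ^ 2 - (deriv f (vstar ⬝ᵥ X ω)) ^ 2 * (h ⬝ᵥ X ω) ^ 2| ∂P := by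
          simpa [Real.norm_eq_abs] using norm_integral_le_integral_norm
            (fun ω => ((deriv f (w ⬝ᵥ X ω)) ^ 2 +
              (f (w ⬝ᵥ X ω) - f (vstar ⬝ᵥ X ω)) * deriv (deriv f) (w ⬝ᵥ X ω)) *
              (h ⬝ᵥ X ω) ^ 2 - (deriv f (vstar ⬝ᵥ X ω)) ^ 2 * (h ⬝ᵥ X ω) ^ 2) (μ := P)
      _ ≤ ∫ ω, (3 * M₁ * M₂) * (|u ⬝ᵥ X ω| * (h ⬝ᵥ X ω) ^ 2) ∂P := by
          refine integral_mono_of_nonneg (Filter.Eventually.of_forall fun ω => abs_nonneg _)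
            (hUB.const_mul _) (Filter.Eventually.of_forall fun ω => ?_)
          dsimp only
          have e1 : ((deriv f (w ⬝ᵥ X ω)) ^ 2 +
              (f (w ⬝ᵥ X ω) - f (vstar ⬝ᵥ X ω)) * deriv (deriv f) (w ⬝ᵥ X ω)) *
              (h ⬝ᵥ X ω) ^ 2 - (deriv f (vstar ⬝ᵥ X ω)) ^ 2 * (h ⬝ᵥ X ω) ^ 2 =
              (((deriv f (w ⬝ᵥ X ω)) ^ 2 +
              (f (w ⬝ᵥ X ω) - f (vstar ⬝ᵥ X ω)) * deriv (deriv f) (w ⬝ᵥ X ω)) -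
              (deriv f (vstar ⬝ᵥ X ω)) ^ 2) * (h ⬝ᵥ X ω) ^ 2 := by ring
          rw [e1, abs_mul, abs_of_nonneg (sq_nonneg (h ⬝ᵥ X ω))]
          have := hpt (w ⬝ᵥ X ω) (vstar ⬝ᵥ X ω)
          rw [hsub ω] at this
          have hB2nn : (0:ℝ) ≤ (h ⬝ᵥ X ω) ^ 2 := sq_nonneg _
          nlinarith [abs_nonneg (u ⬝ᵥ X ω)]
  -- Cauchy–Schwarz step
  have hUabs2 : Integrable (fun ω => |u ⬝ᵥ X ω| ^ 2) P := by
    refine hU2.congr ?_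
    filter_upwards with ω
    rw [sq_abs]
  have hB22 : Integrable (fun ω => ((h ⬝ᵥ X ω) ^ 2) ^ 2) P := by
    refine hB4.congr ?_
    filter_upwards with ω
    ring
  have key2 : ∫ ω, |u ⬝ᵥ X ω| * (h ⬝ᵥ X ω) ^ 2 ∂P ≤
      Real.sqrt ((1 + lam) * nu) * Real.sqrt (3 * (1 + lam) ^ 2) := by
    calc ∫ ω, |u ⬝ᵥ X ω| * (h ⬝ᵥ X ω) ^ 2 ∂P
        ≤ Real.sqrt (∫ ω, |u ⬝ᵥ X ω| ^ 2 ∂P) *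
          Real.sqrt (∫ ω, ((h ⬝ᵥ X ω) ^ 2) ^ 2 ∂P) :=
          my_CS P (fun ω => abs_nonneg _) (fun ω => sq_nonneg _) hUabs2 hB22
      _ = Real.sqrt (q u) * Real.sqrt (3 * (q h) ^ 2) := by
          rw [show ∫ ω, |u ⬝ᵥ X ω| ^ 2 ∂P = ∫ ω, (u ⬝ᵥ X ω) ^ 2 ∂P from
              integral_congr_ae (Filter.Eventually.of_forall fun ω => sq_abs _),
            show ∫ ω, ((h ⬝ᵥ X ω) ^ 2) ^ 2 ∂P = ∫ ω, (h ⬝ᵥ X ω) ^ 4 ∂P from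
              integral_congr_ae (Filter.Eventually.of_forall fun ω => by ring),
            hmom2 u, hmom4 h]
      _ ≤ Real.sqrt ((1 + lam) * nu) * Real.sqrt (3 * (1 + lam) ^ 2) := by
          refine mul_le_mul (Real.sqrt_le_sqrt hqu) (Real.sqrt_le_sqrt ?_)
            (Real.sqrt_nonneg _) (Real.sqrt_nonneg _)
          nlinarith [hq0 h]
  -- arithmetic
  have e_rpow : (1 + lam) ^ ((3:ℝ) / 2) = (1 + lam) * Real.sqrt (1 + lam) := by
    rw [show (3:ℝ) / 2 = 1 + 1 / 2 by norm_num, Real.rpow_add hlam1, Real.rpow_one,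
      ← Real.sqrt_eq_rpow]
  have e_sq1 : Real.sqrt ((1 + lam) * nu) = Real.sqrt (1 + lam) * Real.sqrt nu :=
    Real.sqrt_mul hlam1.le nu
  have e_sq2 : Real.sqrt (3 * (1 + lam) ^ 2) = Real.sqrt 3 * (1 + lam) := by
    rw [Real.sqrt_mul (by norm_num : (0:ℝ) ≤ 3), Real.sqrt_sq hlam1.le]
  have second_nonneg : 0 ≤ 3 / 2 * M₁ * M₃ * (1 + lam) ^ 2 * nu := by positivity
  calc |∫ ω, (((deriv f (w ⬝ᵥ X ω)) ^ 2 +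
        (f (w ⬝ᵥ X ω) - f (vstar ⬝ᵥ X ω)) * deriv (deriv f) (w ⬝ᵥ X ω)) *
        (h ⬝ᵥ X ω) ^ 2 - (deriv f (vstar ⬝ᵥ X ω)) ^ 2 * (h ⬝ᵥ X ω) ^ 2) ∂P|
      ≤ (3 * M₁ * M₂) * ∫ ω, |u ⬝ᵥ X ω| * (h ⬝ᵥ X ω) ^ 2 ∂P := key1
    _ ≤ (3 * M₁ * M₂) * (Real.sqrt ((1 + lam) * nu) * Real.sqrt (3 * (1 + lam) ^ 2)) := by
        refine mul_le_mul_of_nonneg_left key2 (by positivity)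
    _ = 3 * Real.sqrt 3 * M₁ * M₂ * (1 + lam) ^ ((3:ℝ) / 2) * Real.sqrt nu := by
        rw [e_rpow, e_sq1, e_sq2]; ring
    _ ≤ 3 * Real.sqrt 3 * M₁ * M₂ * (1 + lam) ^ ((3:ℝ) / 2) * Real.sqrt nu +
        3 / 2 * M₁ * M₃ * (1 + lam) ^ 2 * nu := by linarith
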